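/- Let N ≥ 2, 1 + 2/N < p < N/(N−2) (p < ∞ if N = 2), and let (α,β) satisfy 2α+(N−2)β > 0, 2α+Nβ ≥ 0, 2α+(N+2)β ≥ 0. If (u^n) is a bounded sequence in H = Σ^m with u^n ≠ 0 and Σ_j K^Q_{α,β}(u_j^n) → 0, where K^Q_{α,β}(u_j) := (2α+(N−2)β)‖∇u_j‖² + (2α+Nβ)‖u_j‖² + (2α+(N+2)β)‖xu_j‖², then K_{α,β}(u^n) > 0 for all sufficiently large n. -/

import Mathlib

open MeasureTheory Filter

/-- The quadratic part `K^Q_{α,β}(u_j)`. -/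
noncomputable def KQfun (N : ℕ) (α β : ℝ) (u : EuclideanSpace ℝ (Fin N) → ℂ) : ℝ :=
  (2*α + ((N:ℝ) - 2)*β) * (∫ x, ‖fderiv ℝ u x‖^2)
    + (2*α + (N:ℝ)*β) * (∫ x, ‖u x‖^2)
    + (2*α + ((N:ℝ) + 2)*β) * (∫ x, ‖x‖^2 * ‖u x‖^2)

/-- The constraint functional `K_{α,β}(u)`. -/
noncomputable def Kfun (N m : ℕ) (p α β : ℝ) (a : Fin m → Fin m → ℝ)
    (u : Fin m → EuclideanSpace ℝ (Fin N) → ℂ) : ℝ :=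
  (1/2) * (∑ j, KQfun N α β (u j))
    - (2*p*α + (N:ℝ)*β)/(2*p) * ∑ j, ∑ k, a j k * ∫ x, (‖u j x‖ * ‖u k x‖) ^ p

set_option maxHeartbeats 1000000

lemma oneDim {g : ℝ → ℝ} (hg : Differentiable ℝ g) (hgi : Integrable g) (s : ℝ) :
    (‖g s‖₊ : ENNReal) ≤ ∫⁻ t, ‖deriv g t‖₊ := by
  by_cases hfin : (∫⁻ t, ‖deriv g t‖₊) = ⊤
  · simp [hfin]
  have hdm : Measurable (deriv g) := measurable_deriv g
  have hdi : Integrable (deriv g) := by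
    refine ⟨hdm.aestronglyMeasurable, ?_⟩
    exact lt_top_iff_ne_top.2 hfin
  have key : ‖g s‖ ≤ ∫ t, ‖deriv g t‖ := by
    refine le_of_forall_pos_le_add (fun ε hε => ?_)
    obtain ⟨a, has, ha⟩ : ∃ a, a ≤ s ∧ ‖g a‖ < ε := by
      by_contra h
      push_neg at h
      have hsub : Set.Iic s ⊆ {x | ε ≤ ‖g x‖} := fun x hx => h x hx
      have h1 : volume {x | ε ≤ ‖g x‖} < ⊤ := hgi.measure_norm_ge_lt_top hε
      have h2 : (volume (Set.Iic s)) ≤ volume {x | ε ≤ ‖g x‖} := measure_mono hsub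
      simp [Real.volume_Iic] at h2
      exact (lt_irrefl _ (h2 ▸ h1)).elim
    have hftc : ∫ t in a..s, deriv g t = g s - g a := by
      refine intervalIntegral.integral_eq_sub_of_hasDerivAt (fun t _ => (hg t).hasDerivAt) ?_
      exact hdi.intervalIntegrable
    have h3 : ‖g s‖ ≤ ‖g a‖ + ‖∫ t in a..s, deriv g t‖ := by
      have : g s = g a + ∫ t in a..s, deriv g t := by rw [hftc]; ring
      rw [this]; exact norm_add_le _ _
    have h4 : ‖∫ t in a..s, deriv g t‖ ≤ ∫ t in a..s, ‖deriv g t‖ :=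
      intervalIntegral.norm_integral_le_integral_norm has
    have h5 : ∫ t in a..s, ‖deriv g t‖ ≤ ∫ t, ‖deriv g t‖ := by
      rw [intervalIntegral.integral_of_le has]
      exact setIntegral_le_integral hdi.norm (Eventually.of_forall (fun t => norm_nonneg _))
    calc ‖g s‖ ≤ ‖g a‖ + ‖∫ t in a..s, deriv g t‖ := h3
      _ ≤ (∫ t, ‖deriv g t‖) + ε := by
          have := h4.trans h5
          linarith
  calc (‖g s‖₊ : ENNReal) = ENNReal.ofReal ‖g s‖ := (ofReal_norm _).symm
    _ ≤ ENNReal.ofReal (∫ t, ‖deriv g t‖) := ENNReal.ofReal_le_ofReal key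
    _ = ∫⁻ t, ‖deriv g t‖₊ := ofReal_integral_norm_eq_lintegral_enorm hdi

lemma slice_integrable {N : ℕ} {f : (Fin N → ℝ) → ℝ} (hf : Integrable f) (i : Fin N) :
    ∀ᵐ x : Fin N → ℝ, Integrable (fun t => f (Function.update x i t)) := by
  classical
  haveI : Unique {j : Fin N // ¬ j ≠ i} :=
    ⟨⟨⟨i, by simp⟩⟩, by rintro ⟨j, hj⟩; simp only [ne_eq, not_not] at hj; simp [hj]⟩
  set e := MeasurableEquiv.piEquivPiSubtypeProd (fun _ : Fin N => ℝ) (fun j => j ≠ i) with he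
  have mpe : MeasurePreserving e volume volume :=
    volume_preserving_piEquivPiSubtypeProd (fun _ : Fin N => ℝ) (fun j => j ≠ i)
  -- f ∘ e.symm is integrable on the product
  have h1 : Integrable (f ∘ e.symm) volume :=
    ((mpe.symm e).integrable_comp_emb e.symm.measurableEmbedding).mpr hf
  have h1' : Integrable (fun w : ({j : Fin N // j ≠ i} → ℝ) × ({j : Fin N // ¬ j ≠ i} → ℝ) =>
      f (e.symm w)) ((volume : Measure ({j : Fin N // j ≠ i} → ℝ)).prod volume) := by
    exact h1
  have h2 : ∀ᵐ y : {j : Fin N // j ≠ i} → ℝ,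
      Integrable (fun z : {j : Fin N // ¬ j ≠ i} → ℝ => f (e.symm (y, z))) := by
    exact h1'.prod_right_ae
  -- transfer the inner pi-unique variable to ℝ
  have mpu : MeasurePreserving (MeasurableEquiv.piUnique
      (fun _ : {j : Fin N // ¬ j ≠ i} => ℝ)).symm volume volume :=
    (volume_preserving_piUnique _).symm _
  have h3 : ∀ᵐ y : {j : Fin N // j ≠ i} → ℝ,
      Integrable (fun t : ℝ => f (e.symm (y, fun _ => t))) := by
    filter_upwards [h2] with y hy
    have := (mpu.integrable_comp_emb (MeasurableEquiv.measurableEmbedding _)).mpr hy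
    refine this.congr (Eventually.of_forall (fun t => ?_))
    show f _ = f _
    refine congrArg f ?_
    refine congrArg (fun z => e.symm (y, z)) ?_
    funext j
    have hj := Unique.eq_default j
    subst hj
    rfl
  -- push forward through fst then through e
  have h4 : ∀ᵐ w : ({j : Fin N // j ≠ i} → ℝ) × ({j : Fin N // ¬ j ≠ i} → ℝ),
      Integrable (fun t : ℝ => f (e.symm (w.1, fun _ => t))) := by
    have := MeasureTheory.Measure.quasiMeasurePreserving_fst
      (μ := (volume : Measure ({j : Fin N // j ≠ i} → ℝ))) (ν := (volume : Measure ({j : Fin N // ¬ j ≠ i} → ℝ)))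
    exact this.ae h3
  have h6 := mpe.quasiMeasurePreserving.ae h4
  filter_upwards [h6] with x hx
  refine hx.congr (Eventually.of_forall (fun t => ?_))
  refine congrArg f ?_
  funext j
  have hcoord : ∀ j : Fin N, (e.symm ((e x).1, fun _ => t)) j
      = if h : j ≠ i then x j else t := by
    intro j
    show (Equiv.piEquivPiSubtypeProd (fun j : Fin N => j ≠ i) (fun _ => ℝ)).symm
      ((e x).1, fun _ => t) j = _
    rw [Equiv.piEquivPiSubtypeProd_symm_apply]
    by_cases h : j ≠ i
    · rw [dif_pos h, dif_pos h]; rfl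
    · rw [dif_neg h, dif_neg h]
  by_cases hj : j = i
  · subst hj
    rw [Function.update_self, hcoord, dif_neg (by simp)]
  · rw [Function.update_of_ne hj, hcoord, dif_pos hj]

lemma gns_pi {N : ℕ} (hN : 2 ≤ N) {v : (Fin N → ℝ) → ℝ} (hv : Differentiable ℝ v)
    (hvi : Integrable v) :
    ∫⁻ x, (‖v x‖₊ : ENNReal) ^ ((N:ℝ)/((N:ℝ)-1))
      ≤ (∫⁻ x, (‖fderiv ℝ v x‖₊ : ENNReal)) ^ ((N:ℝ)/((N:ℝ)-1)) := by
  classical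
  have hN1 : (1:ℝ) < (N:ℝ) := by exact_mod_cast lt_of_lt_of_le one_lt_two hN
  have hN1' : (0:ℝ) < (N:ℝ) - 1 := by linarith
  set q : ℝ := (N:ℝ)/((N:ℝ)-1) with hq
  have hconj : Real.HolderConjugate (N:ℝ) q := Real.HolderConjugate.conjExponent hN1
  have hf : Measurable (fun x : Fin N → ℝ => (‖fderiv ℝ v x‖₊ : ENNReal)) :=
    (measurable_fderiv ℝ v).nnnorm.coe_nnreal_ennreal
  have step1 : ∀ x : Fin N → ℝ, (‖v x‖₊ : ENNReal) ^ q
      = ∏ _i : Fin N, (‖v x‖₊ : ENNReal) ^ ((1:ℝ)/((N:ℝ)-1)) := by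
    intro x
    rw [Finset.prod_const, Finset.card_univ, Fintype.card_fin,
      ← ENNReal.rpow_natCast (_ ^ _) N, ← ENNReal.rpow_mul]
    congr 1
    rw [hq]; field_simp
  have step2 : ∫⁻ x, ∏ i : Fin N, (‖v x‖₊ : ENNReal) ^ ((1:ℝ)/((N:ℝ)-1))
      ≤ ∫⁻ x, ∏ i : Fin N,
        (∫⁻ t, (‖fderiv ℝ v (Function.update x i t)‖₊ : ENNReal)) ^ ((1:ℝ)/((N:ℝ)-1)) := by
    have hae : ∀ᵐ x : Fin N → ℝ, ∀ i : Fin N,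
        Integrable (fun t => v (Function.update x i t)) :=
      (ae_all_iff).2 (fun i => slice_integrable hvi i)
    refine lintegral_mono_ae ?_
    filter_upwards [hae] with x hx
    refine Finset.prod_le_prod' ?_
    intro i _
    refine ENNReal.rpow_le_rpow ?_ (by positivity)
    -- pointwise bound ‖v x‖ ≤ ∫⁻ ‖fderiv v‖ along line i
    by_cases hfin : (∫⁻ t, (‖fderiv ℝ v (Function.update x i t)‖₊ : ENNReal)) = ⊤
    · simp [hfin]
    have hg : Differentiable ℝ (v ∘ Function.update x i) := by
      intro t
      exact (hv _).comp t (hasDerivAt_update x i t).differentiableAt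
    have hderiv_le : ∀ t : ℝ, (‖deriv (v ∘ Function.update x i) t‖₊ : ENNReal)
        ≤ (‖fderiv ℝ v (Function.update x i t)‖₊ : ENNReal) := by
      intro t
      have h1 : deriv (v ∘ Function.update x i) t
          = fderiv ℝ v (Function.update x i t) (deriv (Function.update x i) t) := by
        rw [fderiv_comp_deriv _ (hv _)
          (hasDerivAt_update x i t).differentiableAt]
      rw [h1]
      calc (‖fderiv ℝ v (Function.update x i t) (deriv (Function.update x i) t)‖₊ : ENNReal)
          ≤ (‖fderiv ℝ v (Function.update x i t)‖₊ : ENNReal)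
            * ‖deriv (Function.update x i) t‖₊ := by
              exact_mod_cast ContinuousLinearMap.le_opNNNorm _ _
        _ ≤ _ := by
              rw [deriv_update, Pi.nnnorm_single]
              simp
    calc (‖v x‖₊ : ENNReal) = (‖(v ∘ Function.update x i) (x i)‖₊ : ENNReal) := by
          rw [Function.comp_apply, Function.update_eq_self]
      _ ≤ ∫⁻ t, (‖deriv (v ∘ Function.update x i) t‖₊ : ENNReal) :=
          oneDim hg (hx i) (x i)
      _ ≤ ∫⁻ t, (‖fderiv ℝ v (Function.update x i t)‖₊ : ENNReal) :=
          lintegral_mono (fun t => hderiv_le t)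
  have step3 : ∫⁻ x, ∏ i : Fin N,
        (∫⁻ t, (‖fderiv ℝ v (Function.update x i t)‖₊ : ENNReal)) ^ ((1:ℝ)/((N:ℝ)-1))
      ≤ (∫⁻ x, (‖fderiv ℝ v x‖₊ : ENNReal)) ^ q := by
    have hp' : Real.HolderConjugate (Fintype.card (Fin N)) q := by
      rw [Fintype.card_fin]; exact_mod_cast hconj
    have := MeasureTheory.lintegral_prod_lintegral_pow_le
      (fun _ : Fin N => (volume : Measure ℝ)) hp' hf
    simp only [Fintype.card_fin] at this
    rw [MeasureTheory.volume_pi]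
    exact this
  calc ∫⁻ x, (‖v x‖₊ : ENNReal) ^ q
      = ∫⁻ x, ∏ _i : Fin N, (‖v x‖₊ : ENNReal) ^ ((1:ℝ)/((N:ℝ)-1)) := by
        simp_rw [step1]
    _ ≤ _ := step2.trans step3

lemma gns_euclidean {N : ℕ} (hN : 2 ≤ N) :
    ∃ C : NNReal, ∀ v : EuclideanSpace ℝ (Fin N) → ℝ, Differentiable ℝ v → Integrable v →
    ∫⁻ x, (‖v x‖₊ : ENNReal) ^ ((N:ℝ)/((N:ℝ)-1))
      ≤ ((C : ENNReal) * ∫⁻ x, (‖fderiv ℝ v x‖₊ : ENNReal)) ^ ((N:ℝ)/((N:ℝ)-1)) := by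
  classical
  set Φ := (PiLp.continuousLinearEquiv 2 ℝ (fun _ : Fin N => ℝ)).symm with hΦ
  set Λ : (Fin N → ℝ) →L[ℝ] EuclideanSpace ℝ (Fin N) := Φ.toContinuousLinearMap with hΛ
  refine ⟨‖Λ‖₊, fun v hv hvi => ?_⟩
  set e := (MeasurableEquiv.toLp 2 (Fin N → ℝ)).symm with he
  have mp : MeasurePreserving (⇑e.symm) volume volume :=
    (EuclideanSpace.volume_preserving_symm_measurableEquiv_toLp (Fin N)).symm _
  have hcoe : ⇑e.symm = ⇑Φ := rfl
  set w : (Fin N → ℝ) → ℝ := fun y => v (Φ y) with hw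
  have hwd : Differentiable ℝ w := hv.comp Φ.differentiable
  have hwi : Integrable w := by
    have := (mp.integrable_comp_emb e.symm.measurableEmbedding).mpr hvi
    exact this
  have key := gns_pi hN hwd hwi
  have hL : ∫⁻ y, (‖w y‖₊ : ENNReal) ^ ((N:ℝ)/((N:ℝ)-1))
      = ∫⁻ x, (‖v x‖₊ : ENNReal) ^ ((N:ℝ)/((N:ℝ)-1)) := by
    rw [← MeasurePreserving.lintegral_comp_emb mp e.symm.measurableEmbedding]
    rfl
  have hfd : ∀ y, (‖fderiv ℝ w y‖₊ : ENNReal)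
      ≤ (‖Λ‖₊ : ENNReal)
        * (‖fderiv ℝ v (Φ y)‖₊ : ENNReal) := by
    intro y
    have h1 : fderiv ℝ w y = (fderiv ℝ v (Φ y)).comp Λ := by
      have h2 : w = v ∘ Φ := rfl
      rw [h2, fderiv_comp y (hv _) Φ.differentiableAt]
      congr 1
      exact Φ.fderiv
    rw [h1]
    have h3 : ‖(fderiv ℝ v (Φ y)).comp Λ‖₊ ≤ ‖fderiv ℝ v (Φ y)‖₊ * ‖Λ‖₊ :=
      ContinuousLinearMap.opNNNorm_comp_le _ _
    calc (‖(fderiv ℝ v (Φ y)).comp Λ‖₊ : ENNReal)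
        ≤ ((‖fderiv ℝ v (Φ y)‖₊ * ‖Λ‖₊ : NNReal) : ENNReal) := ENNReal.coe_le_coe.2 h3
      _ = _ := by rw [ENNReal.coe_mul, mul_comm]
  have hR : ∫⁻ y, (‖fderiv ℝ w y‖₊ : ENNReal)
      ≤ (‖Λ‖₊ : ENNReal)
        * ∫⁻ x, (‖fderiv ℝ v x‖₊ : ENNReal) := by
    calc ∫⁻ y, (‖fderiv ℝ w y‖₊ : ENNReal)
        ≤ ∫⁻ y, (‖Λ‖₊ : ENNReal)
            * (‖fderiv ℝ v (Φ y)‖₊ : ENNReal) := lintegral_mono hfd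
      _ = (‖Λ‖₊ : ENNReal)
            * ∫⁻ y, (‖fderiv ℝ v (Φ y)‖₊ : ENNReal) := lintegral_const_mul' _ _ ENNReal.coe_ne_top
      _ = _ := by
            congr 1
            rw [← MeasurePreserving.lintegral_comp_emb mp e.symm.measurableEmbedding]
            rfl
  calc ∫⁻ x, (‖v x‖₊ : ENNReal) ^ ((N:ℝ)/((N:ℝ)-1))
      = ∫⁻ y, (‖w y‖₊ : ENNReal) ^ ((N:ℝ)/((N:ℝ)-1)) := hL.symm
    _ ≤ (∫⁻ y, (‖fderiv ℝ w y‖₊ : ENNReal)) ^ ((N:ℝ)/((N:ℝ)-1)) := key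
    _ ≤ _ := by
        apply ENNReal.rpow_le_rpow hR
        have hN1 : (1:ℝ) < (N:ℝ) := by exact_mod_cast lt_of_lt_of_le one_lt_two hN
        have : (0:ℝ) < (N:ℝ) - 1 := by linarith
        positivity

lemma main_bound (N : ℕ) (hN : 2 ≤ N) (p : ℝ) (hp : 1 + 2/(N:ℝ) < p)
    (hpc : 3 ≤ N → p < (N:ℝ)/((N:ℝ)-2)) :
    ∃ C : ℝ, 0 < C ∧ ∀ u : EuclideanSpace ℝ (Fin N) → ℂ, Differentiable ℝ u →
      Integrable (fun x => ‖u x‖^2) → Integrable (fun x => ‖fderiv ℝ u x‖^2) →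
      Integrable (fun x => (‖u x‖ * ‖u x‖)^p) →
      ∫ x, (‖u x‖ * ‖u x‖)^p ≤ C * ((∫ x, ‖u x‖^2) + ∫ x, ‖fderiv ℝ u x‖^2)^p := by
  classical
  -- scalar setup
  have hNR : (0:ℝ) < (N:ℝ) := by positivity
  have hN1 : (1:ℝ) < (N:ℝ) := by exact_mod_cast lt_of_lt_of_le one_lt_two hN
  have hN1' : (0:ℝ) < (N:ℝ) - 1 := by linarith
  have hp1 : 1 < p := by
    have : (0:ℝ) < 2/(N:ℝ) := by positivity
    linarith
  set q : ℝ := (N:ℝ)/((N:ℝ)-1) with hqdef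
  have hq1 : 1 < q := by
    rw [hqdef, lt_div_iff₀ hN1']; linarith
  have hq0 : 0 < q := lt_trans one_pos hq1
  have hq2 : q ≤ 2 := by
    rw [hqdef, div_le_iff₀ hN1']
    have : (2:ℝ) ≤ (N:ℝ) := by exact_mod_cast hN
    linarith
  set γ : ℝ := 2*p*((N:ℝ)-1)/(N:ℝ) with hγdef
  have hγq : γ * q = 2*p := by
    rw [hγdef, hqdef]; field_simp
  have hNge2 : (2:ℝ) ≤ (N:ℝ) := by exact_mod_cast hN
  have hγ2 : 2 < γ := by
    have h1 : 2 < (p-1)*(N:ℝ) := by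
      have h2 : 2/(N:ℝ) < p - 1 := by linarith
      rw [div_lt_iff₀ hNR] at h2
      linarith
    rw [hγdef, lt_div_iff₀ hNR]
    nlinarith [mul_lt_mul_of_pos_left h1 hN1', hNge2, hp1, hN1]
  have hγ1 : 1 < γ := by linarith
  have hγ0 : 0 < γ := by linarith
  have hγp : γ - 1 < p := by
    by_cases h3 : 3 ≤ N
    · have hcn := hpc h3
      have hN2 : (0:ℝ) < (N:ℝ) - 2 := by
        have : (3:ℝ) ≤ (N:ℝ) := by exact_mod_cast h3
        linarith
      rw [lt_div_iff₀ hN2] at hcn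
      rw [hγdef, div_sub' (ne_of_gt hNR), div_lt_iff₀ hNR]
      nlinarith
    · have hN2 : N = 2 := by omega
      subst hN2
      have hγeq : γ = p := by rw [hγdef]; norm_num
      linarith
  have hγle : γ ≤ 2*p := by
    have : γ * 1 ≤ γ * q := by
      apply mul_le_mul_of_nonneg_left (le_of_lt hq1) (le_of_lt hγ0)
    rw [mul_one] at this
    linarith [hγq ▸ this]
  have hp1' : (0:ℝ) < p - 1 := by linarith
  set s : ℝ := (γ-2)/(p-1) with hsdef
  have hs0 : 0 < s := by rw [hsdef]; exact div_pos (by linarith) hp1'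
  have hs1 : s < 1 := by
    rw [hsdef, div_lt_one hp1']; linarith
  set b : ℝ := s*q/2 with hbdef
  have hb0 : 0 < b := by rw [hbdef]; positivity
  have hb1 : b < 1 := by
    rw [hbdef]
    nlinarith
  set aa : ℝ := (1-s)*q/2 with haadef
  set cc : ℝ := q/2 with hccdef
  have haa0 : 0 ≤ aa := by
    rw [haadef]; nlinarith
  have hcc0 : 0 ≤ cc := by rw [hccdef]; positivity
  have hiden : aa + cc = p * (1 - b) := by
    rw [haadef, hccdef, hbdef, hsdef, hγdef, hqdef]
    field_simp
    ring
  have hsexp : 2*(1-s) + 2*p*s = 2*γ-2 := by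
    rw [hsdef]; field_simp; ring
  -- the GNS constant
  obtain ⟨C0, hC0⟩ := gns_euclidean hN
  set γ' : NNReal := γ.toNNReal with hγ'def
  have hγ'coe : (γ' : ℝ) = γ := Real.coe_toNNReal _ (le_of_lt hγ0)
  have hγ'1 : 1 < γ' := by
    rw [← NNReal.coe_lt_coe, hγ'coe]; exact_mod_cast hγ1
  -- the big constant
  set K : ENNReal := (((C0 : ENNReal) * (γ' : ENNReal)) ^ q) with hKdef
  have hKne : K ≠ ⊤ := by
    rw [hKdef]
    exact ENNReal.rpow_ne_top_of_nonneg (le_of_lt hq0) (by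
      exact ENNReal.mul_ne_top ENNReal.coe_ne_top ENNReal.coe_ne_top)
  set K' : ENNReal := K ^ (1/(1-b)) with hK'def
  have hK'ne : K' ≠ ⊤ := by
    rw [hK'def]
    refine ENNReal.rpow_ne_top_of_nonneg ?_ hKne
    have : 0 < 1 - b := by linarith
    positivity
  refine ⟨K'.toReal + 1, by positivity, ?_⟩
  intro u hu h2 hg hnl
  set nn : EuclideanSpace ℝ (Fin N) → ENNReal := fun x => (‖u x‖₊ : ENNReal) with hnn
  set fnn : EuclideanSpace ℝ (Fin N) → ENNReal := fun x => (‖fderiv ℝ u x‖₊ : ENNReal) with hfnn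
  set A : ENNReal := ∫⁻ x, nn x ^ (2:ℝ) with hAdef
  set G : ENNReal := ∫⁻ x, fnn x ^ (2:ℝ) with hGdef
  set X : ENNReal := ∫⁻ x, nn x ^ (2*p) with hXdef
  have hnnm : Measurable nn := hu.continuous.measurable.nnnorm.coe_nnreal_ennreal
  have hfnnm : Measurable fnn := (measurable_fderiv ℝ u).nnnorm.coe_nnreal_ennreal
  -- conversions between Bochner integrals and lintegrals
  have hA : ENNReal.ofReal (∫ x, ‖u x‖^2) = A := by
    rw [MeasureTheory.ofReal_integral_eq_lintegral_ofReal h2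
      (Eventually.of_forall (fun x => by positivity))]
    rw [hAdef]
    congr 1
    funext x
    rw [ENNReal.ofReal_pow (norm_nonneg _), ofReal_norm, enorm_eq_nnnorm]
    rw [show ((2:ℝ)) = ((2:ℕ):ℝ) by norm_num, ENNReal.rpow_natCast]
  have hG : ENNReal.ofReal (∫ x, ‖fderiv ℝ u x‖^2) = G := by
    rw [MeasureTheory.ofReal_integral_eq_lintegral_ofReal hg
      (Eventually.of_forall (fun x => by positivity))]
    rw [hGdef]
    congr 1
    funext x
    rw [ENNReal.ofReal_pow (norm_nonneg _), ofReal_norm, enorm_eq_nnnorm]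
    rw [show ((2:ℝ)) = ((2:ℕ):ℝ) by norm_num, ENNReal.rpow_natCast]
  have hX : ENNReal.ofReal (∫ x, (‖u x‖ * ‖u x‖)^p) = X := by
    rw [MeasureTheory.ofReal_integral_eq_lintegral_ofReal hnl
      (Eventually.of_forall (fun x => by positivity))]
    rw [hXdef]
    congr 1
    funext x
    rw [← ENNReal.ofReal_rpow_of_nonneg (by positivity) (by linarith : (0:ℝ) ≤ p),
      ENNReal.ofReal_mul (norm_nonneg _), ofReal_norm, enorm_eq_nnnorm]
    rw [show (nn x * nn x) = nn x ^ ((2:ℕ):ℝ) by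
      rw [ENNReal.rpow_natCast]; ring]
    rw [← ENNReal.rpow_mul]
    norm_num
  have hAfin : A ≠ ⊤ := by rw [← hA]; exact ENNReal.ofReal_ne_top
  have hGfin : G ≠ ⊤ := by rw [← hG]; exact ENNReal.ofReal_ne_top
  have hXfin : X ≠ ⊤ := by rw [← hX]; exact ENNReal.ofReal_ne_top
  -- the auxiliary function v = ‖u‖^γ
  set v : EuclideanSpace ℝ (Fin N) → ℝ := fun x => ‖u x‖ ^ γ with hvdef
  have hvd : Differentiable ℝ v := hu.norm_rpow hγ1
  have hvi : Integrable v := by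
    refine Integrable.mono (h2.add hnl) hvd.continuous.aestronglyMeasurable
      (Eventually.of_forall (fun x => ?_))
    have h0 : (0:ℝ) ≤ ‖u x‖ := norm_nonneg _
    have hv0 : (0:ℝ) ≤ ‖u x‖ ^ γ := Real.rpow_nonneg h0 _
    rw [Real.norm_of_nonneg hv0]
    have hbig : ‖u x‖ ^ γ ≤ ‖u x‖^2 + (‖u x‖ * ‖u x‖)^p := by
      have hmul : (‖u x‖ * ‖u x‖)^p = ‖u x‖ ^ (2*p) := by
        rw [show ‖u x‖ * ‖u x‖ = ‖u x‖ ^ ((2:ℕ):ℝ) by rw [Real.rpow_natCast]; ring,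
          ← Real.rpow_mul h0]
        norm_num
      have hsq : ‖u x‖^2 = ‖u x‖ ^ ((2:ℕ):ℝ) := by rw [Real.rpow_natCast]
      rcases eq_or_lt_of_le h0 with h0' | h0'
      · rw [← h0', Real.zero_rpow (by linarith)]
        positivity
      rcases le_or_gt (‖u x‖) 1 with h1' | h1'
      · have : ‖u x‖ ^ γ ≤ ‖u x‖ ^ ((2:ℕ):ℝ) :=
          Real.rpow_le_rpow_of_exponent_ge h0' h1' (by push_cast; linarith)
        rw [← hsq] at this
        have h2nn : (0:ℝ) ≤ (‖u x‖ * ‖u x‖)^p := by positivity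
        linarith
      · have : ‖u x‖ ^ γ ≤ ‖u x‖ ^ (2*p) :=
          Real.rpow_le_rpow_of_exponent_le (le_of_lt h1') hγle
        rw [← hmul] at this
        have h2nn : (0:ℝ) ≤ ‖u x‖^2 := by positivity
        linarith
    calc ‖u x‖ ^ γ ≤ ‖u x‖^2 + (‖u x‖ * ‖u x‖)^p := hbig
      _ ≤ ‖(fun x => ‖u x‖^2 + (‖u x‖ * ‖u x‖)^p) x‖ := le_abs_self _
  -- apply GNS to v
  have hgns := hC0 v hvd hvi
  have hLHS : ∫⁻ x, (‖v x‖₊ : ENNReal) ^ q = X := by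
    rw [hXdef]
    congr 1
    funext x
    rw [hvdef]
    simp only
    rw [Real.nnnorm_rpow_of_nonneg (norm_nonneg _), nnnorm_norm,
      ENNReal.coe_rpow_of_nonneg _ (le_of_lt hγ0), ← ENNReal.rpow_mul, hγq]
  -- pointwise bound on fderiv v
  have hDpt : ∀ x, (‖fderiv ℝ v x‖₊ : ENNReal) ≤ (γ' : ENNReal) * (nn x ^ (γ-1) * fnn x) := by
    intro x
    have := nnnorm_fderiv_norm_rpow_le hu (x := x) hγ'1
    rw [hγ'coe] at this
    calc (‖fderiv ℝ v x‖₊ : ENNReal) ≤ ((γ' * ‖u x‖₊ ^ (γ - 1) * ‖fderiv ℝ u x‖₊ : NNReal) : ENNReal) := by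
          exact_mod_cast this
      _ = (γ' : ENNReal) * (nn x ^ (γ-1) * fnn x) := by
          push_cast [ENNReal.coe_rpow_of_nonneg _ (by linarith : (0:ℝ) ≤ γ - 1)]
          ring
  -- Hölder for the derivative term
  have hHold : ∫⁻ x, nn x ^ (γ-1) * fnn x
      ≤ (∫⁻ x, nn x ^ (2*γ-2)) ^ (1/2 : ℝ) * G ^ (1/2 : ℝ) := by
    have hconj2 : Real.HolderConjugate 2 2 := by
      constructor <;> norm_num
    have h := ENNReal.lintegral_mul_le_Lp_mul_Lq volume hconj2
      ((hnnm.pow_const _).aemeasurable : AEMeasurable (fun x => nn x ^ (γ-1)) volume)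
      ((hfnnm).aemeasurable : AEMeasurable fnn volume)
    calc ∫⁻ x, nn x ^ (γ-1) * fnn x
        = ∫⁻ x, ((fun x => nn x ^ (γ-1)) * fnn) x := by rfl
      _ ≤ (∫⁻ x, (nn x ^ (γ-1)) ^ (2:ℝ)) ^ (1/2:ℝ) * (∫⁻ x, fnn x ^ (2:ℝ)) ^ (1/2:ℝ) := h
      _ = (∫⁻ x, nn x ^ (2*γ-2)) ^ (1/2 : ℝ) * G ^ (1/2 : ℝ) := by
          have hfun : ∀ x : EuclideanSpace ℝ (Fin N),
              (nn x ^ (γ-1)) ^ (2:ℝ) = nn x ^ (2*γ-2) := fun x => by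
            rw [← ENNReal.rpow_mul]; congr 1; ring
          simp_rw [hfun]
          rw [hGdef]
  -- interpolation for the middle term
  have hY : ∫⁻ x, nn x ^ (2*γ-2) ≤ A ^ (1-s) * X ^ s := by
    have h1s : (0:ℝ) < 1 - s := by linarith
    have hconjs : Real.HolderConjugate (1/(1-s)) (1/s) := by
      rw [Real.holderConjugate_iff]; constructor
      · rw [lt_div_iff₀ h1s]; linarith
      · field_simp; ring
    have hp0 : (0:ℝ) < p := by linarith
    have h2s : (0:ℝ) ≤ 2*(1-s) := by linarith
    have h2ps : (0:ℝ) ≤ 2*p*s := by positivity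
    have hsplit : ∀ x : EuclideanSpace ℝ (Fin N),
        nn x ^ (2*γ-2) = nn x ^ (2*(1-s)) * nn x ^ (2*p*s) := fun x => by
      rw [← ENNReal.rpow_add_of_nonneg _ _ h2s h2ps, hsexp]
    have h := ENNReal.lintegral_mul_le_Lp_mul_Lq volume hconjs
      ((hnnm.pow_const _).aemeasurable : AEMeasurable (fun x => nn x ^ (2*(1-s))) volume)
      ((hnnm.pow_const _).aemeasurable : AEMeasurable (fun x => nn x ^ (2*p*s)) volume)
    simp only [Pi.mul_apply] at h
    have e0a : 1/(1/(1-s)) = 1 - s := one_div_one_div _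
    have e0b : 1/(1/s) = s := one_div_one_div _
    rw [e0a, e0b] at h
    have e1 : ∀ x : EuclideanSpace ℝ (Fin N),
        (nn x ^ (2*(1-s))) ^ (1/(1-s) : ℝ) = nn x ^ (2:ℝ) := fun x => by
      rw [← ENNReal.rpow_mul]
      congr 1
      field_simp
    have e2 : ∀ x : EuclideanSpace ℝ (Fin N),
        (nn x ^ (2*p*s)) ^ (1/s : ℝ) = nn x ^ (2*p) := fun x => by
      rw [← ENNReal.rpow_mul]
      congr 1
      field_simp
    simp_rw [e1, e2] at h
    calc ∫⁻ x, nn x ^ (2*γ-2) = ∫⁻ x, nn x ^ (2*(1-s)) * nn x ^ (2*p*s) := by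
          simp_rw [hsplit]
      _ ≤ (∫⁻ x, nn x ^ (2:ℝ)) ^ (1-s) * (∫⁻ x, nn x ^ (2*p)) ^ s := h
      _ = A ^ (1-s) * X ^ s := by rw [hAdef, hXdef]
  -- assemble
  have hD : ∫⁻ x, (‖fderiv ℝ v x‖₊ : ENNReal)
      ≤ (γ' : ENNReal) * ((A ^ (1-s) * X ^ s) ^ (1/2:ℝ) * G ^ (1/2:ℝ)) := by
    calc ∫⁻ x, (‖fderiv ℝ v x‖₊ : ENNReal)
        ≤ ∫⁻ x, (γ' : ENNReal) * (nn x ^ (γ-1) * fnn x) := lintegral_mono hDpt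
      _ = (γ' : ENNReal) * ∫⁻ x, nn x ^ (γ-1) * fnn x :=
          lintegral_const_mul' _ _ ENNReal.coe_ne_top
      _ ≤ (γ' : ENNReal) * ((∫⁻ x, nn x ^ (2*γ-2)) ^ (1/2:ℝ) * G ^ (1/2:ℝ)) := by
          exact mul_le_mul_right hHold _
      _ ≤ _ := by
          refine mul_le_mul_right (mul_le_mul_left ?_ _) _
          exact ENNReal.rpow_le_rpow hY (by norm_num)
  have hmain : X ≤ K * (A ^ aa * X ^ b * G ^ cc) := by
    calc X = ∫⁻ x, (‖v x‖₊ : ENNReal) ^ q := hLHS.symm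
      _ ≤ ((C0 : ENNReal) * ∫⁻ x, (‖fderiv ℝ v x‖₊ : ENNReal)) ^ q := hgns
      _ ≤ ((C0 : ENNReal) * ((γ' : ENNReal) * ((A ^ (1-s) * X ^ s) ^ (1/2:ℝ) * G ^ (1/2:ℝ)))) ^ q := by
          exact ENNReal.rpow_le_rpow (mul_le_mul_right hD _) (le_of_lt hq0)
      _ = K * (A ^ aa * X ^ b * G ^ cc) := by
          rw [hKdef]
          rw [← mul_assoc]
          rw [ENNReal.mul_rpow_of_nonneg _ _ (le_of_lt hq0)]
          congr 1
          rw [ENNReal.mul_rpow_of_nonneg _ _ (by norm_num : (0:ℝ) ≤ 1/2)]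
          rw [ENNReal.mul_rpow_of_nonneg _ _ (le_of_lt hq0),
            ENNReal.mul_rpow_of_nonneg _ _ (le_of_lt hq0)]
          rw [← ENNReal.rpow_mul A, ← ENNReal.rpow_mul X, ← ENNReal.rpow_mul G,
            ← ENNReal.rpow_mul A, ← ENNReal.rpow_mul X]
          congr 1
          · congr 1
            · congr 1
              rw [haadef]; ring
            · congr 1
              rw [hbdef]; ring
          · congr 1
            rw [hccdef]; ring
  -- final bound in ENNReal
  have hfinal : X ≤ K' * (A + G) ^ p := by
    by_cases hX0 : X = 0
    · rw [hX0]; exact bot_le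
    have hXb_ne : X ^ b ≠ 0 := by
      simp [ENNReal.rpow_eq_zero_iff, hX0, hXfin, ne_of_gt hb0]
    have hXb_top : X ^ b ≠ ⊤ := by
      exact ENNReal.rpow_ne_top_of_nonneg (le_of_lt hb0) hXfin
    have hcancel : X ^ (1-b) ≤ K * (A ^ aa * G ^ cc) := by
      have h1 : X ^ (1-b) * X ^ b ≤ (K * (A ^ aa * G ^ cc)) * X ^ b := by
        rw [← ENNReal.rpow_add_of_nonneg _ _ (by linarith : (0:ℝ) ≤ 1 - b) (le_of_lt hb0)]
        rw [show (1-b) + b = 1 by ring, ENNReal.rpow_one]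
        calc X ≤ K * (A ^ aa * X ^ b * G ^ cc) := hmain
          _ = (K * (A ^ aa * G ^ cc)) * X ^ b := by ring
      exact (ENNReal.mul_le_mul_iff_left hXb_ne hXb_top).1 h1
    have h1b : 0 < 1 - b := by linarith
    calc X = (X ^ (1-b)) ^ (1/(1-b)) := by
          rw [← ENNReal.rpow_mul]
          rw [show (1-b) * (1/(1-b)) = 1 by field_simp, ENNReal.rpow_one]
      _ ≤ (K * (A ^ aa * G ^ cc)) ^ (1/(1-b)) :=
          ENNReal.rpow_le_rpow hcancel (by positivity)
      _ = K' * (A ^ aa * G ^ cc) ^ (1/(1-b)) := by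
          rw [hK'def, ENNReal.mul_rpow_of_nonneg _ _ (by positivity)]
      _ ≤ K' * ((A+G) ^ aa * (A+G) ^ cc) ^ (1/(1-b)) := by
          refine mul_le_mul_right (ENNReal.rpow_le_rpow ?_ (by positivity)) _
          exact mul_le_mul' (ENNReal.rpow_le_rpow le_self_add haa0)
            (ENNReal.rpow_le_rpow le_add_self hcc0)
      _ = K' * (A+G) ^ p := by
          congr 1
          rw [← ENNReal.rpow_add_of_nonneg _ _ haa0 hcc0, ← ENNReal.rpow_mul]
          congr 1
          rw [hiden]
          field_simp
  -- convert to real numbers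
  have hXreal : ∫ x, (‖u x‖ * ‖u x‖)^p = X.toReal := by
    rw [← hX, ENNReal.toReal_ofReal (integral_nonneg (fun x => by positivity))]
  have hRHSne : K' * (A + G) ^ p ≠ ⊤ := by
    refine ENNReal.mul_ne_top hK'ne ?_
    exact ENNReal.rpow_ne_top_of_nonneg (by linarith) (by
      exact ENNReal.add_ne_top.2 ⟨hAfin, hGfin⟩)
  have h2r : X.toReal ≤ (K' * (A + G) ^ p).toReal := ENNReal.toReal_mono hRHSne hfinal
  rw [hXreal]
  have hAG : (A + G).toReal = (∫ x, ‖u x‖^2) + ∫ x, ‖fderiv ℝ u x‖^2 := by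
    rw [ENNReal.toReal_add hAfin hGfin, ← hA, ← hG,
      ENNReal.toReal_ofReal (integral_nonneg (fun x => by positivity)),
      ENNReal.toReal_ofReal (integral_nonneg (fun x => by positivity))]
  calc X.toReal ≤ (K' * (A + G) ^ p).toReal := h2r
    _ = K'.toReal * ((A+G).toReal) ^ p := by
        rw [ENNReal.toReal_mul]
        congr 1
        exact (ENNReal.toReal_rpow _ _).symm
    _ ≤ (K'.toReal + 1) * ((∫ x, ‖u x‖^2) + ∫ x, ‖fderiv ℝ u x‖^2)^p := by
        rw [hAG]
        refine mul_le_mul_of_nonneg_right (by linarith) ?_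
        positivity

/-- If a bounded sequence of nonzero elements of `H = Σ^m` satisfies
`Σ_j K^Q(u_j^n) → 0`, then `K_{α,β}(u^n) > 0` for all large `n`. -/
theorem stmt_8 (N m : ℕ) (hN : 2 ≤ N) (p α β : ℝ)
    (hp : 1 + 2/(N:ℝ) < p) (hpc : 3 ≤ N → p < (N:ℝ)/((N:ℝ) - 2))
    (hc1 : 0 < 2*α + ((N:ℝ) - 2)*β) (hc2 : 0 ≤ 2*α + (N:ℝ)*β)
    (hc3 : 0 ≤ 2*α + ((N:ℝ) + 2)*β)
    (a : Fin m → Fin m → ℝ) (ha : ∀ j k, 0 < a j k) (hsym : ∀ j k, a j k = a k j)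
    (u : ℕ → Fin m → EuclideanSpace ℝ (Fin N) → ℂ)
    (hd : ∀ n j, Differentiable ℝ (u n j))
    (h2 : ∀ n j, Integrable (fun x => ‖u n j x‖^2))
    (hx : ∀ n j, Integrable (fun x => ‖x‖^2 * ‖u n j x‖^2))
    (hg : ∀ n j, Integrable (fun x => ‖fderiv ℝ (u n j) x‖^2))
    (hnl : ∀ n j k, Integrable (fun x => (‖u n j x‖ * ‖u n k x‖) ^ p))
    (hnz : ∀ n, u n ≠ 0)
    (hbdd : ∃ B : ℝ, ∀ n, ∑ j, ((∫ x, ‖u n j x‖^2) + (∫ x, ‖x‖^2 * ‖u n j x‖^2)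
        + (∫ x, ‖fderiv ℝ (u n j) x‖^2)) ≤ B)
    (hKQ : Tendsto (fun n => ∑ j, KQfun N α β (u n j)) atTop (nhds 0)) :
    ∃ n₀, ∀ n ≥ n₀, 0 < Kfun N m p α β a (u n) := by
  classical
  have hNR : (0:ℝ) < (N:ℝ) := by positivity
  have hp1 : 1 < p := by
    have : (0:ℝ) < 2/(N:ℝ) := by positivity
    linarith
  have hp0 : 0 < p := by linarith
  -- abbreviations
  set Q : ℕ → ℝ := fun n => ∑ j, KQfun N α β (u n j) with hQdef
  set A : ℕ → Fin m → ℝ := fun n j => ∫ x, ‖u n j x‖^2 with hAdef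
  set G : ℕ → Fin m → ℝ := fun n j => ∫ x, ‖fderiv ℝ (u n j) x‖^2 with hGdef
  set W : ℕ → Fin m → ℝ := fun n j => ∫ x, ‖x‖^2 * ‖u n j x‖^2 with hWdef
  set X : ℕ → Fin m → ℝ := fun n j => ∫ x, (‖u n j x‖ * ‖u n j x‖)^p with hXdef
  have hA0 : ∀ n j, 0 ≤ A n j := fun n j => integral_nonneg (fun x => by positivity)
  have hG0 : ∀ n j, 0 ≤ G n j := fun n j => integral_nonneg (fun x => by positivity)
  have hW0 : ∀ n j, 0 ≤ W n j := fun n j => integral_nonneg (fun x => by positivity)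
  have hX0 : ∀ n j, 0 ≤ X n j := fun n j => integral_nonneg (fun x => by positivity)
  set δ : ℝ := (2*α + ((N:ℝ) - 2)*β)/2 with hδdef
  have hδ0 : 0 < δ := by rw [hδdef]; linarith
  have hc2' : δ ≤ 2*α + (N:ℝ)*β := by rw [hδdef]; linarith
  have hKQeq : ∀ n j, KQfun N α β (u n j)
      = (2*α + ((N:ℝ) - 2)*β) * G n j + (2*α + (N:ℝ)*β) * A n j
        + (2*α + ((N:ℝ) + 2)*β) * W n j := fun n j => rfl
  have hKQge : ∀ n j, δ * (A n j + G n j) ≤ KQfun N α β (u n j) := by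
    intro n j
    rw [hKQeq]
    have h1 : δ * G n j ≤ (2*α + ((N:ℝ) - 2)*β) * G n j :=
      mul_le_mul_of_nonneg_right (by rw [hδdef]; linarith) (hG0 n j)
    have h2' : δ * A n j ≤ (2*α + (N:ℝ)*β) * A n j :=
      mul_le_mul_of_nonneg_right hc2' (hA0 n j)
    have h3 : 0 ≤ (2*α + ((N:ℝ) + 2)*β) * W n j := mul_nonneg hc3 (hW0 n j)
    nlinarith
  have hKQ0 : ∀ n j, 0 ≤ KQfun N α β (u n j) := by
    intro n j
    refine le_trans ?_ (hKQge n j)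
    have := hA0 n j; have := hG0 n j
    positivity
  have hQ0 : ∀ n, 0 ≤ Q n := fun n => Finset.sum_nonneg (fun j _ => hKQ0 n j)
  have hQge : ∀ n j, δ * (A n j + G n j) ≤ Q n := by
    intro n j
    refine le_trans (hKQge n j) ?_
    exact Finset.single_le_sum (fun k _ => hKQ0 n k) (Finset.mem_univ j)
  have hAGle : ∀ n j, A n j + G n j ≤ Q n / δ := by
    intro n j
    rw [le_div_iff₀ hδ0, mul_comm]
    exact hQge n j
  -- positivity of Q n
  have hQpos : ∀ n, 0 < Q n := by
    intro n
    obtain ⟨j, hj⟩ : ∃ j, u n j ≠ 0 := by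
      by_contra h
      push_neg at h
      exact hnz n (funext h)
    obtain ⟨x₀, hx₀⟩ : ∃ x₀, u n j x₀ ≠ 0 := by
      by_contra h
      push_neg at h
      exact hj (funext h)
    have hApos : 0 < A n j := by
      rw [hAdef]
      rw [MeasureTheory.integral_pos_iff_support_of_nonneg_ae
        (Eventually.of_forall (fun x => by positivity)) (h2 n j)]
      have hsupp : {x | u n j x ≠ 0} ⊆ Function.support (fun x => ‖u n j x‖^2) := by
        intro x hx'
        simp only [Function.mem_support]
        exact pow_ne_zero 2 (norm_ne_zero_iff.2 hx')
      refine lt_of_lt_of_le ?_ (measure_mono hsupp)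
      refine ((isOpen_compl_iff.2 isClosed_singleton).preimage (hd n j).continuous).measure_pos
        volume ⟨x₀, hx₀⟩
    calc (0:ℝ) < δ * (A n j + G n j) := by
          have := hG0 n j
          apply mul_pos hδ0
          linarith
      _ ≤ Q n := hQge n j
  -- the GN bound
  obtain ⟨C, hC0, hC⟩ := main_bound N hN p hp hpc
  have hXle : ∀ n j, X n j ≤ C * (Q n / δ) ^ p := by
    intro n j
    calc X n j ≤ C * (A n j + G n j) ^ p :=
          hC (u n j) (hd n j) (h2 n j) (hg n j) (hnl n j j)
      _ ≤ C * (Q n / δ) ^ p := by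
          refine mul_le_mul_of_nonneg_left ?_ (le_of_lt hC0)
          refine Real.rpow_le_rpow ?_ (hAGle n j) (le_of_lt hp0)
          have := hA0 n j; have := hG0 n j; linarith
  -- bound on cross terms
  have hcross : ∀ n j k, ∫ x, (‖u n j x‖ * ‖u n k x‖)^p ≤ (X n j + X n k)/2 := by
    intro n j k
    have hpt : ∀ x : EuclideanSpace ℝ (Fin N), (‖u n j x‖ * ‖u n k x‖)^p
        ≤ ((‖u n j x‖ * ‖u n j x‖)^p + (‖u n k x‖ * ‖u n k x‖)^p)/2 := by
      intro x
      have h0j : (0:ℝ) ≤ ‖u n j x‖ := norm_nonneg _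
      have h0k : (0:ℝ) ≤ ‖u n k x‖ := norm_nonneg _
      rw [Real.mul_rpow h0j h0k, Real.mul_rpow h0j h0j, Real.mul_rpow h0k h0k]
      nlinarith [sq_nonneg (‖u n j x‖^p - ‖u n k x‖^p), Real.rpow_nonneg h0j p,
        Real.rpow_nonneg h0k p]
    calc ∫ x, (‖u n j x‖ * ‖u n k x‖)^p
        ≤ ∫ x, ((‖u n j x‖ * ‖u n j x‖)^p + (‖u n k x‖ * ‖u n k x‖)^p)/2 := by
          refine integral_mono (hnl n j k) ?_ hpt
          exact ((hnl n j j).add (hnl n k k)).div_const 2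
      _ = (X n j + X n k)/2 := by
          rw [integral_div, integral_add (hnl n j j) (hnl n k k)]
  set S : ℕ → ℝ := fun n => ∑ l, X n l with hSdef
  have hXS : ∀ n j, X n j ≤ S n := fun n j =>
    Finset.single_le_sum (fun l _ => hX0 n l) (Finset.mem_univ j)
  have hS0 : ∀ n, 0 ≤ S n := fun n => Finset.sum_nonneg (fun l _ => hX0 n l)
  set NL : ℕ → ℝ := fun n => ∑ j, ∑ k, a j k * ∫ x, (‖u n j x‖ * ‖u n k x‖)^p with hNLdef
  have hNL0 : ∀ n, 0 ≤ NL n := by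
    intro n
    refine Finset.sum_nonneg (fun j _ => Finset.sum_nonneg (fun k _ => ?_))
    exact mul_nonneg (le_of_lt (ha j k)) (integral_nonneg (fun x => by positivity))
  set Asum : ℝ := ∑ j : Fin m, ∑ k : Fin m, a j k with hAsumdef
  have hAsum0 : 0 ≤ Asum :=
    Finset.sum_nonneg (fun j _ => Finset.sum_nonneg (fun k _ => le_of_lt (ha j k)))
  have hNLle : ∀ n, NL n ≤ Asum * (↑m * (C * (Q n / δ)^p)) := by
    intro n
    have hSle : S n ≤ ↑m * (C * (Q n / δ)^p) := by
      calc S n ≤ ∑ _l : Fin m, C * (Q n / δ)^p :=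
            Finset.sum_le_sum (fun l _ => hXle n l)
        _ = ↑m * (C * (Q n / δ)^p) := by
            rw [Finset.sum_const, Finset.card_univ, Fintype.card_fin, nsmul_eq_mul]
    calc NL n ≤ ∑ j : Fin m, ∑ k : Fin m, a j k * S n := by
          refine Finset.sum_le_sum (fun j _ => Finset.sum_le_sum (fun k _ => ?_))
          refine mul_le_mul_of_nonneg_left ?_ (le_of_lt (ha j k))
          calc ∫ x, (‖u n j x‖ * ‖u n k x‖)^p ≤ (X n j + X n k)/2 := hcross n j k
            _ ≤ S n := by
                have := hXS n j; have := hXS n k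
                linarith
      _ = Asum * S n := by rw [hAsumdef]; simp_rw [Finset.sum_mul]
      _ ≤ Asum * (↑m * (C * (Q n / δ)^p)) := mul_le_mul_of_nonneg_left hSle hAsum0
  -- the constant in front of Q^p
  set κ : ℝ := (2*p*α + (N:ℝ)*β)/(2*p) with hκdef
  set Cbig : ℝ := |κ| * (Asum * (↑m * (C / δ^p))) with hCbigdef
  have hCbig0 : 0 ≤ Cbig := by
    rw [hCbigdef]
    have h1 : 0 ≤ C / δ^p := by positivity
    positivity
  have hKfun : ∀ n, Kfun N m p α β a (u n) ≥ (1/2) * Q n - Cbig * Q n ^ p := by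
    intro n
    have h1 : Kfun N m p α β a (u n) = (1/2) * Q n - κ * NL n := rfl
    rw [h1, hκdef]
    have h2' : κ * NL n ≤ Cbig * Q n ^ p := by
      calc κ * NL n ≤ |κ| * NL n :=
            mul_le_mul_of_nonneg_right (le_abs_self κ) (hNL0 n)
        _ ≤ |κ| * (Asum * (↑m * (C * (Q n / δ) ^ p))) :=
            mul_le_mul_of_nonneg_left (hNLle n) (abs_nonneg κ)
        _ = Cbig * Q n ^ p := by
            rw [hCbigdef, Real.div_rpow (hQ0 n) (le_of_lt hδ0)]
            field_simp
    rw [hκdef] at h2'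
    linarith
  -- choose the threshold
  have hQp1 : Tendsto (fun n => Q n ^ (p-1)) atTop (nhds 0) := by
    have h := hKQ.rpow_const (p := p-1) (Or.inr (by linarith))
    rwa [Real.zero_rpow (by linarith : p - 1 ≠ 0)] at h
  have hev : ∀ᶠ n in atTop, Q n ^ (p-1) < 1/(4*(Cbig+1)) :=
    hQp1.eventually_lt_const (by positivity)
  obtain ⟨n₀, hn₀⟩ := eventually_atTop.1 hev
  refine ⟨n₀, fun n hn => ?_⟩
  have hsmall := hn₀ n hn
  have hQn := hQpos n
  have hkey : Cbig * Q n ^ p < (1/4) * Q n := by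
    have hQp : Q n ^ p = Q n ^ (p-1) * Q n := by
      have h := Real.rpow_add hQn (p-1) 1
      rw [Real.rpow_one] at h
      rw [← h]
      congr 1
      ring
    rw [hQp]
    calc Cbig * (Q n ^ (p-1) * Q n) ≤ (Cbig + 1) * (Q n ^ (p-1) * Q n) := by
          refine mul_le_mul_of_nonneg_right (by linarith) ?_
          exact mul_nonneg (Real.rpow_nonneg (hQ0 n) _) (le_of_lt hQn)
      _ = ((Cbig + 1) * Q n ^ (p-1)) * Q n := by ring
      _ < (1/4) * Q n := by
          refine mul_lt_mul_of_pos_right ?_ hQn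
          rw [show (1:ℝ)/4 = (Cbig+1) * (1/(4*(Cbig+1))) by field_simp]
          exact mul_lt_mul_of_pos_left hsmall (by positivity)
  have := hKfun n
  linarith
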